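/- Let f₁,...,fₙ : [0,1] → ℝ be continuous and let λ₁(t) ≤ ... ≤ λₙ(t) be given continuous functions. Then the total variation of the argument (counted in turns) of the path t ↦ ∏_{k=1}^{n} (λ_k(t)+i)²/(1+λ_k(t)²) in the unit circle is at most n. -/

import Mathlib

open Complex in
lemma factor_eq (x : ℝ) :
    ((x : ℂ) + Complex.I) ^ 2 / (1 + (x : ℂ) ^ 2) =
      Complex.exp ((2 * Complex.arg ((x : ℂ) + Complex.I)) * Complex.I) := by
  have h1 : ‖(x:ℂ) + Complex.I‖ ^ 2 = x ^ 2 + 1 := by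
    rw [Complex.sq_norm]
    simpa using Complex.normSq_add_mul_I x 1
  have habs : ((‖(x:ℂ) + Complex.I‖ : ℝ) : ℂ) ^ 2 = 1 + (x:ℂ) ^ 2 := by
    rw [show ((‖(x:ℂ) + Complex.I‖ : ℝ) : ℂ) ^ 2
        = ((‖(x:ℂ) + Complex.I‖ ^ 2 : ℝ) : ℂ) by push_cast; ring, h1]
    push_cast; ring
  have h := Complex.norm_mul_exp_arg_mul_I ((x:ℂ) + Complex.I)
  have hne : (1 : ℂ) + (x:ℂ) ^ 2 ≠ 0 := by
    rw [← habs]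
    intro h0
    have h0' : ((‖(x:ℂ) + Complex.I‖ : ℝ) : ℂ) = 0 :=
      pow_eq_zero_iff (n := 2) (by norm_num) |>.mp h0
    have : ((x:ℂ) + Complex.I) = 0 := by
      rw [Complex.ofReal_eq_zero, norm_eq_zero] at h0'; exact h0'
    have := congrArg Complex.im this
    simp at this
  rw [div_eq_iff hne, ← habs]
  conv_lhs => rw [← h]
  rw [mul_pow, sq (Complex.exp _), ← Complex.exp_add]
  ring_nf

/-- The variation of the argument (in turns) of the path
`t ↦ ∏_{k=1}^{n} (λ_k(t)+i)²/(1+λ_k(t)²)` on the unit circle, where the `λ_k` are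
continuous and ordered `λ₁(t) ≤ ⋯ ≤ λₙ(t)`, is at most `n`: for any continuous lift `θ`
of `(1/2π)·arg` along the path, `|θ(1) − θ(0)| ≤ n`. -/
theorem variation_of_argument_le
    (n : ℕ) (lam : Fin n → ℝ → ℝ)
    (hcont : ∀ k, ContinuousOn (lam k) (Set.Icc 0 1))
    (hord : ∀ t ∈ Set.Icc (0:ℝ) 1, ∀ j k : Fin n, j ≤ k → lam j t ≤ lam k t)
    (θ : ℝ → ℝ) (hθcont : ContinuousOn θ (Set.Icc 0 1))
    (hθ : ∀ t ∈ Set.Icc (0:ℝ) 1,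
      Complex.exp (2 * Real.pi * Complex.I * (θ t)) =
        ∏ k : Fin n, (((lam k t : ℝ) : ℂ) + Complex.I) ^ 2 / (1 + ((lam k t : ℝ) : ℂ) ^ 2)) :
    |θ 1 - θ 0| ≤ n := by
  have hπ : (0:ℝ) < Real.pi := Real.pi_pos
  set S : ℝ → ℝ := fun t => ∑ k : Fin n, Complex.arg ((lam k t : ℂ) + Complex.I) with hSdef
  -- bounds on S
  have hS0 : ∀ t, 0 ≤ S t := by
    intro t
    exact Finset.sum_nonneg fun k _ => Complex.arg_nonneg_iff.2 (by simp)
  have hSn : ∀ t, S t ≤ n * Real.pi := by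
    intro t
    calc S t ≤ ∑ _k : Fin n, Real.pi :=
          Finset.sum_le_sum fun k _ => Complex.arg_le_pi _
      _ = n * Real.pi := by simp [mul_comm]
  -- integer-valued gap
  have key : ∀ t ∈ Set.Icc (0:ℝ) 1, ∃ m : ℤ, θ t - S t / Real.pi = m := by
    intro t ht
    have hexp : Complex.exp (2 * Real.pi * Complex.I * θ t)
        = Complex.exp (((2 * S t : ℝ) : ℂ) * Complex.I) := by
      rw [hθ t ht]
      rw [show (((2 * S t : ℝ) : ℂ) * Complex.I)
          = ∑ k : Fin n, (2 * Complex.arg ((lam k t : ℂ) + Complex.I)) * Complex.I by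
        push_cast [hSdef, Finset.mul_sum, Finset.sum_mul]
        rfl]
      rw [Complex.exp_sum]
      exact Finset.prod_congr rfl fun k _ => factor_eq (lam k t)
    obtain ⟨m, hm⟩ := Complex.exp_eq_exp_iff_exists_int.1 hexp
    refine ⟨m, ?_⟩
    have h3 : Complex.I * (((2 * Real.pi * θ t - 2 * S t - m * (2 * Real.pi) : ℝ)) : ℂ) = 0 := by
      push_cast at hm ⊢
      linear_combination hm
    have h4 : ((2 * Real.pi * θ t - 2 * S t - m * (2 * Real.pi) : ℝ) : ℂ) = 0 :=
      (mul_eq_zero.1 h3).resolve_left Complex.I_ne_zero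
    have h5 : (2 * Real.pi * θ t - 2 * S t - m * (2 * Real.pi) : ℝ) = 0 :=
      Complex.ofReal_eq_zero.1 h4
    field_simp
    linarith
  -- continuity of S
  have hScont : ContinuousOn S (Set.Icc 0 1) := by
    apply continuousOn_finset_sum
    intro k _
    have hz : ContinuousOn (fun t => ((lam k t : ℂ) + Complex.I)) (Set.Icc 0 1) :=
      (Complex.continuous_ofReal.comp_continuousOn (hcont k)).add continuousOn_const
    intro t ht
    exact (Complex.continuousAt_arg (by simp [Complex.mem_slitPlane_iff])).comp_continuousWithinAt
      (hz t ht)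
  set g : ℝ → ℝ := fun t => θ t - S t / Real.pi with hgdef
  have hgcont : ContinuousOn g (Set.Icc 0 1) :=
    hθcont.sub (hScont.div_const _)
  have h0mem : (0:ℝ) ∈ Set.Icc (0:ℝ) 1 := by constructor <;> norm_num
  have h1mem : (1:ℝ) ∈ Set.Icc (0:ℝ) 1 := by constructor <;> norm_num
  obtain ⟨m0, hm0⟩ := key 0 h0mem
  obtain ⟨m1, hm1⟩ := key 1 h1mem
  -- g is constant: g 0 = g 1
  have hgeq : g 0 = g 1 := by
    by_contra hne
    have hiv : Set.uIcc (g 0) (g 1) ⊆ g '' Set.uIcc 0 1 :=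
      intermediate_value_uIcc (by rwa [Set.uIcc_of_le (by norm_num : (0:ℝ) ≤ 1)])
    set v : ℝ := min (g 0) (g 1) + 1/2 with hv
    have hg0 : g 0 = (m0:ℝ) := hm0
    have hg1 : g 1 = (m1:ℝ) := hm1
    have hgap : 1 ≤ |g 1 - g 0| := by
      have hmm : m0 ≠ m1 := by
        intro h; apply hne; rw [hg0, hg1, h]
      calc (1:ℝ) = ((1:ℤ):ℝ) := by norm_num
        _ ≤ |((m1 - m0 : ℤ) : ℝ)| := by
            rw [← Int.cast_abs]; exact_mod_cast Int.one_le_abs (sub_ne_zero.2 hmm.symm)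
        _ = |g 1 - g 0| := by rw [hg0, hg1]; push_cast; ring_nf
    have hvmem : v ∈ Set.uIcc (g 0) (g 1) := by
      rcases le_total (g 0) (g 1) with h | h
      · have hvm : v = g 0 + 1/2 := by rw [hv, min_eq_left h]
        rw [abs_of_nonneg (by linarith)] at hgap
        rw [Set.uIcc_of_le h, hvm]
        exact ⟨by linarith, by linarith⟩
      · have hvm : v = g 1 + 1/2 := by rw [hv, min_eq_right h]
        rw [abs_of_nonpos (by linarith)] at hgap
        rw [Set.uIcc_of_ge h, hvm]
        exact ⟨by linarith, by linarith⟩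
    obtain ⟨t, ht, hgt⟩ := hiv hvmem
    rw [Set.uIcc_of_le (by norm_num : (0:ℝ) ≤ 1)] at ht
    obtain ⟨m, hm⟩ := key t ht
    have hmin : ∃ mm : ℤ, min (g 0) (g 1) = (mm:ℝ) := by
      rcases le_total (g 0) (g 1) with h | h
      · exact ⟨m0, by rw [min_eq_left h]; exact hm0⟩
      · exact ⟨m1, by rw [min_eq_right h]; exact hm1⟩
    obtain ⟨mm, hmm'⟩ := hmin
    have hmt : g t = (m:ℝ) := hm
    have : (m : ℝ) = (mm:ℝ) + 1/2 := by rw [← hmt, hgt, hv, hmm']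
    have h2 : (2:ℝ) * m = 2 * mm + 1 := by linarith
    have : (2 * m : ℤ) = 2 * mm + 1 := by exact_mod_cast h2
    omega
  -- conclude
  have hdiff : θ 1 - θ 0 = S 1 / Real.pi - S 0 / Real.pi := by
    have h01 : θ 0 - S 0 / Real.pi = θ 1 - S 1 / Real.pi := hgeq
    linarith
  rw [hdiff, abs_sub_le_iff]
  have b0 : 0 ≤ S 0 / Real.pi := div_nonneg (hS0 0) hπ.le
  have b0' : S 0 / Real.pi ≤ n := by
    rw [div_le_iff₀ hπ]; exact hSn 0
  have b1 : 0 ≤ S 1 / Real.pi := div_nonneg (hS0 1) hπ.le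
  have b1' : S 1 / Real.pi ≤ n := by
    rw [div_le_iff₀ hπ]; exact hSn 1
  constructor <;> linarith
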